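/- Let T₁, T₂ ∈ ℝ, Z₁ ∈ C((−∞, T₁]), Z₂ ∈ C((−∞, T₂]), and let v : (−∞, T₁] → (−∞, T₂] be an increasing differentiable bijection with v'(t) → 1 and Z₂(v(t)) − Z₁(t) → 0 as t → −∞. Let f : ℝ → ℝ be uniformly continuous and bounded. Then for any t₀ < min(T₁, T₂), the limit lim_{t→−∞} (1/(t₀ − t)) ∫_t^{t₀} f(Z₁(s)) ds exists and is finite if and only if lim_{t→−∞} (1/(t₀ − t)) ∫_t^{t₀} f(Z₂(s)) ds does, and in that case the two limits are equal. -/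

import Mathlib

open Filter Set Topology MeasureTheory

/-- A function measurable and bounded on `Icc a b` is interval integrable. -/
lemma aux_intervalIntegrable_of_bounded {g : ℝ → ℝ} {a b C : ℝ} (hab : a ≤ b)
    (hm : AEStronglyMeasurable g (volume.restrict (Icc a b)))
    (hb : ∀ u ∈ Icc a b, |g u| ≤ C) :
    IntervalIntegrable g volume a b := by
  rw [intervalIntegrable_iff_integrableOn_Icc_of_le hab]
  refine ⟨hm, MeasureTheory.HasFiniteIntegral.restrict_of_bounded (C := C)
    measure_Icc_lt_top ?_⟩
  filter_upwards [ae_restrict_mem measurableSet_Icc] with u hu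
  simpa using hb u hu

lemma aux_int (g v : ℝ → ℝ) {t c C : ℝ} (ht : t ≤ c)
    (hgv : ContinuousOn (fun u => g (v u)) (Icc t c))
    (hgb : ∀ x, |g x| ≤ C)
    (hbd : ∀ u ∈ Icc t c, |deriv v u| ≤ 2) :
    IntervalIntegrable (fun u => g (v u) * deriv v u) volume t c := by
  have hC0 : 0 ≤ C := (abs_nonneg _).trans (hgb 0)
  refine aux_intervalIntegrable_of_bounded (C := C * 2) ht ?_ ?_
  · exact (hgv.aestronglyMeasurable measurableSet_Icc).mul
      (measurable_deriv v).aestronglyMeasurable.restrict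
  · intro u hu
    calc |g (v u) * deriv v u| = |g (v u)| * |deriv v u| := abs_mul _ _
      _ ≤ C * 2 := mul_le_mul (hgb _) (hbd u hu) (abs_nonneg _) hC0

/-- Change of variables via FTC, needing no continuity of `deriv v`. -/
lemma aux_subst (g v : ℝ → ℝ) {t c T₂ C : ℝ} (ht : t ≤ c) (hvc : v c < T₂)
    (hg : ContinuousOn g (Iic T₂)) (hgb : ∀ x, |g x| ≤ C)
    (hvd : ∀ u ∈ Iic c, DifferentiableAt ℝ v u)
    (hvm : ∀ u ∈ Icc t c, v u ≤ v c)
    (hbd : ∀ u ∈ Icc t c, |deriv v u| ≤ 2) :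
    ∫ u in t..c, g (v u) * deriv v u = ∫ s in v t..v c, g s := by
  have hgc : ∀ x : ℝ, x < T₂ → ContinuousAt g x := fun x hx =>
    (hg.mono Iio_subset_Iic_self).continuousAt (isOpen_Iio.mem_nhds hx)
  set F : ℝ → ℝ := fun x => ∫ s in (v t)..x, g s with hFdef
  have hvt : v t < T₂ := lt_of_le_of_lt (hvm t ⟨le_rfl, ht⟩) hvc
  have hFd : ∀ x : ℝ, x < T₂ → HasDerivAt F (g x) x := by
    intro x hx
    refine intervalIntegral.integral_hasDerivAt_right ?_ ?_ (hgc x hx)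
    · refine ContinuousOn.intervalIntegrable (hg.mono ?_)
      exact fun y hy => le_trans hy.2 (sup_le hvt.le hx.le)
    · exact (hg.mono Iio_subset_Iic_self).stronglyMeasurableAtFilter isOpen_Iio x hx
  have key : ∀ u ∈ Set.uIcc t c, HasDerivAt (fun u => F (v u)) (g (v u) * deriv v u) u := by
    intro u hu
    rw [Set.uIcc_of_le ht] at hu
    have h1 : HasDerivAt v (deriv v u) u := (hvd u hu.2).hasDerivAt
    have h2 : HasDerivAt F (g (v u)) (v u) := hFd _ (lt_of_le_of_lt (hvm u hu) hvc)
    exact h2.comp u h1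
  have hvcont : ContinuousOn v (Icc t c) := fun u hu =>
    ((hvd u hu.2).continuousAt).continuousWithinAt
  have hgvcont : ContinuousOn (fun u => g (v u)) (Icc t c) :=
    hg.comp hvcont (fun u hu => le_trans (hvm u hu) hvc.le)
  have hint := aux_int g v ht hgvcont hgb hbd
  have heq := intervalIntegral.integral_eq_sub_of_hasDerivAt key hint
  rw [heq]
  simp [F]

set_option maxHeartbeats 1000000 in
theorem ergodic_average_timeChange_invariant
    (T₁ T₂ : ℝ) (Z₁ Z₂ v : ℝ → ℝ)
    (hZ₁ : ContinuousOn Z₁ (Iic T₁)) (hZ₂ : ContinuousOn Z₂ (Iic T₂))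
    (hvmono : StrictMonoOn v (Iic T₁)) (hvsurj : v '' Iic T₁ = Iic T₂)
    (hvdiff : ∀ t ∈ Iic T₁, DifferentiableAt ℝ v t)
    (hv' : Tendsto (deriv v) atBot (𝓝 1))
    (hZZ : Tendsto (fun t => Z₂ (v t) - Z₁ t) atBot (𝓝 0))
    (f : ℝ → ℝ) (hf : UniformContinuous f) (hfb : ∃ M : ℝ, ∀ x, |f x| ≤ M) :
    ∀ t₀ : ℝ, t₀ < min T₁ T₂ → ∀ L : ℝ,
      Tendsto (fun t => (1 / (t₀ - t)) * ∫ s in t..t₀, f (Z₁ s)) atBot (𝓝 L) ↔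
      Tendsto (fun t => (1 / (t₀ - t)) * ∫ s in t..t₀, f (Z₂ s)) atBot (𝓝 L) := by
  obtain ⟨M, hM⟩ := hfb
  have hM0 : 0 ≤ M := (abs_nonneg _).trans (hM 0)
  intro t₀ ht₀ L
  have hT₁ : t₀ < T₁ := lt_of_lt_of_le ht₀ (min_le_left _ _)
  have hT₂ : t₀ < T₂ := lt_of_lt_of_le ht₀ (min_le_right _ _)
  have hvmap : ∀ u, u ≤ T₁ → v u ≤ T₂ := by
    intro u hu
    have : v u ∈ Iic T₂ := hvsurj ▸ mem_image_of_mem v hu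
    exact this
  have hvT : ∀ u, u < T₁ → v u < T₂ := fun u hu =>
    lt_of_lt_of_le (hvmono hu.le (le_refl T₁) hu) (hvmap T₁ le_rfl)
  have hg₁ : ContinuousOn (fun s => f (Z₁ s)) (Iic T₁) := hf.continuous.comp_continuousOn hZ₁
  have hg₂ : ContinuousOn (fun s => f (Z₂ s)) (Iic T₂) := hf.continuous.comp_continuousOn hZ₂
  have hint₁ : ∀ a b : ℝ, a ≤ T₁ → b ≤ T₁ →
      IntervalIntegrable (fun s => f (Z₁ s)) volume a b := fun a b ha hb =>
    ContinuousOn.intervalIntegrable (hg₁.mono (fun y hy => le_trans hy.2 (sup_le ha hb)))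
  have hint₂ : ∀ a b : ℝ, a ≤ T₂ → b ≤ T₂ →
      IntervalIntegrable (fun s => f (Z₂ s)) volume a b := fun a b ha hb =>
    ContinuousOn.intervalIntegrable (hg₂.mono (fun y hy => le_trans hy.2 (sup_le ha hb)))
  suffices key : Tendsto (fun t => ((1 / (t₀ - t)) * ∫ s in t..t₀, f (Z₁ s))
      - (1 / (t₀ - t)) * ∫ s in t..t₀, f (Z₂ s)) atBot (𝓝 0) by
    constructor
    · intro h
      have h2 := h.sub key
      rw [sub_zero] at h2
      exact h2.congr (fun x => by ring)
    · intro h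
      have h2 := key.add h
      rw [zero_add] at h2
      exact h2.congr (fun x => by ring)
  rw [Metric.tendsto_nhds]
  intro ε hε
  set ε' := ε / (4 * (M + 1)) with hε'def
  have hε' : 0 < ε' := div_pos hε (by linarith)
  obtain ⟨δ, hδ, hδf⟩ := Metric.uniformContinuous_iff.1 hf ε' hε'
  have hv'' : ∀ᶠ u in atBot, |deriv v u - 1| < min ε' 1 := by
    have := Metric.tendsto_nhds.1 hv' (min ε' 1) (lt_min hε' one_pos)
    simpa [Real.dist_eq] using this
  obtain ⟨c₁, hc₁⟩ := eventually_atBot.1 hv''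
  have hZZ' : ∀ᶠ u in atBot, |Z₂ (v u) - Z₁ u| < δ := by
    have := Metric.tendsto_nhds.1 hZZ δ hδ
    simpa [Real.dist_eq] using this
  obtain ⟨c₂, hc₂⟩ := eventually_atBot.1 hZZ'
  set c := min (min c₁ c₂) (t₀ - 1) with hcdef
  have hcc₁ : c ≤ c₁ := le_trans (min_le_left _ _) (min_le_left _ _)
  have hcc₂ : c ≤ c₂ := le_trans (min_le_left _ _) (min_le_right _ _)
  have hct₀ : c < t₀ := lt_of_le_of_lt (min_le_right _ _) (by linarith)
  have hcT₁ : c < T₁ := hct₀.trans hT₁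
  have hvcT₂ : v c < T₂ := hvT c hcT₁
  set C := |∫ s in c..t₀, f (Z₁ s)| + M * |v c - c| + M * |t₀ - v c| with hCdef
  have hC0 : 0 ≤ C := by positivity
  rw [eventually_atBot]
  refine ⟨min c (t₀ - max 1 (4 * C / ε)), fun t ht => ?_⟩
  have htc : t ≤ c := le_trans ht (min_le_left _ _)
  have htlen : max 1 (4 * C / ε) ≤ t₀ - t := by
    have h := le_trans ht (min_le_right _ _); linarith
  have ht₀t : (0:ℝ) < t₀ - t :=
    lt_of_lt_of_le (lt_of_lt_of_le one_pos (le_max_left _ _)) htlen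
  have htT₁ : t ≤ T₁ := le_trans htc hcT₁.le
  have hvtT₂ : v t ≤ T₂ := hvmap t htT₁
  have htT₂ : t ≤ T₂ := le_trans (le_trans htc hct₀.le) hT₂.le
  -- derivative bound on (-∞, c]
  have hbd : ∀ u ∈ Icc t c, |deriv v u| ≤ 2 := by
    intro u hu
    have h1 := hc₁ u (le_trans hu.2 hcc₁)
    have h2 : |deriv v u - 1| ≤ 1 := le_trans h1.le (min_le_right _ _)
    calc |deriv v u| = |(deriv v u - 1) + 1| := by ring_nf
      _ ≤ |deriv v u - 1| + |(1:ℝ)| := abs_add_le _ _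
      _ ≤ 2 := by rw [abs_one]; linarith
  have hvd' : ∀ u ∈ Iic c, DifferentiableAt ℝ v u := fun u hu =>
    hvdiff u (le_trans hu hcT₁.le)
  have hvm' : ∀ u ∈ Icc t c, v u ≤ v c := fun u hu =>
    hvmono.monotoneOn (le_trans hu.2 hcT₁.le) hcT₁.le hu.2
  have hvcont : ContinuousOn v (Icc t c) := fun u hu =>
    ((hvd' u hu.2).continuousAt).continuousWithinAt
  -- substitution for g₂
  have hsubst : ∫ u in t..c, f (Z₂ (v u)) * deriv v u = ∫ s in (v t)..(v c), f (Z₂ s) :=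
    aux_subst (fun s => f (Z₂ s)) v htc hvcT₂ hg₂ (fun x => hM _) hvd' hvm' hbd
  -- FTC for v
  have hftcv : ∫ u in t..c, (fun _ => (1:ℝ)) (v u) * deriv v u = ∫ s in (v t)..(v c), (1:ℝ) :=
    aux_subst (C := 1) (fun _ => (1:ℝ)) v htc hvcT₂ continuousOn_const (fun x => by simp) hvd' hvm' hbd
  have hvint : ∫ u in t..c, deriv v u = v c - v t := by
    have h1 : (fun u => (fun _ => (1:ℝ)) (v u) * deriv v u) = fun u => deriv v u := by
      funext u; simp
    rw [h1] at hftcv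
    simpa using hftcv
  have hderiv_int : IntervalIntegrable (deriv v) volume t c := by
    refine aux_intervalIntegrable_of_bounded (C := 2) htc ?_ hbd
    exact (measurable_deriv v).aestronglyMeasurable.restrict
  -- bound on |v t - t|
  have hsmall : |∫ u in t..c, (deriv v u - 1)| ≤ ε' * (c - t) := by
    have := intervalIntegral.norm_integral_le_of_norm_le_const (C := ε')
      (f := fun u => deriv v u - 1) (a := t) (b := c) ?_
    · rwa [Real.norm_eq_abs, abs_of_nonneg (by linarith : (0:ℝ) ≤ c - t)] at this
    · intro x hx
      rw [Set.uIoc_of_le htc] at hx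
      exact le_trans (hc₁ x (le_trans hx.2 hcc₁)).le
        (le_trans (min_le_left _ _) le_rfl)
  have hsub_int : ∫ u in t..c, (deriv v u - 1) = (v c - v t) - (c - t) := by
    rw [intervalIntegral.integral_sub hderiv_int intervalIntegrable_const, hvint]
    simp
  have hvt_bound : |v t - t| ≤ |v c - c| + ε' * (c - t) := by
    have h1 : v t - t = (v c - c) - ((v c - v t) - (c - t)) := by ring
    rw [h1]
    calc |(v c - c) - ((v c - v t) - (c - t))|
        ≤ |v c - c| + |(v c - v t) - (c - t)| := abs_sub _ _
      _ ≤ |v c - c| + ε' * (c - t) := by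
          rw [← hsub_int]; exact add_le_add le_rfl hsmall
  -- pointwise comparison on (t, c]
  have hpt : ∀ u ∈ Set.uIoc t c, |f (Z₁ u) - f (Z₂ (v u)) * deriv v u| ≤ ε' + M * ε' := by
    intro u hu
    rw [Set.uIoc_of_le htc] at hu
    have huc : u ≤ c := hu.2
    have h1 : |f (Z₁ u) - f (Z₂ (v u))| ≤ ε' := by
      have hd : dist (Z₁ u) (Z₂ (v u)) < δ := by
        rw [Real.dist_eq, abs_sub_comm]
        exact hc₂ u (le_trans huc hcc₂)
      have := hδf hd
      rw [Real.dist_eq] at this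
      exact this.le
    have h2 : |deriv v u - 1| ≤ ε' :=
      le_trans (hc₁ u (le_trans huc hcc₁)).le (min_le_left _ _)
    calc |f (Z₁ u) - f (Z₂ (v u)) * deriv v u|
        = |(f (Z₁ u) - f (Z₂ (v u))) - f (Z₂ (v u)) * (deriv v u - 1)| := by ring_nf
      _ ≤ |f (Z₁ u) - f (Z₂ (v u))| + |f (Z₂ (v u)) * (deriv v u - 1)| := abs_sub _ _
      _ = |f (Z₁ u) - f (Z₂ (v u))| + |f (Z₂ (v u))| * |deriv v u - 1| := by rw [abs_mul]
      _ ≤ ε' + M * ε' := add_le_add h1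
          (mul_le_mul (hM _) h2 (abs_nonneg _) hM0)
  -- Term A
  have hgvcont : ContinuousOn (fun u => f (Z₂ (v u))) (Icc t c) :=
    hg₂.comp hvcont (fun u hu => le_trans (hvm' u hu) hvcT₂.le)
  have hintA : IntervalIntegrable (fun u => f (Z₂ (v u)) * deriv v u) volume t c :=
    aux_int (fun s => f (Z₂ s)) v htc hgvcont (fun x => hM _) hbd
  have hA : |(∫ u in t..c, f (Z₁ u)) - ∫ s in (v t)..(v c), f (Z₂ s)|
      ≤ (ε' + M * ε') * (c - t) := by
    rw [← hsubst, ← intervalIntegral.integral_sub (hint₁ t c htT₁ hcT₁.le) hintA]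
    have := intervalIntegral.norm_integral_le_of_norm_le_const (C := ε' + M * ε')
      (f := fun u => f (Z₁ u) - f (Z₂ (v u)) * deriv v u) (a := t) (b := c) hpt
    rwa [Real.norm_eq_abs, abs_of_nonneg (by linarith : (0:ℝ) ≤ c - t)] at this
  -- Term B, C bounds
  have hB : |∫ s in t..(v t), f (Z₂ s)| ≤ M * |v t - t| := by
    have := intervalIntegral.norm_integral_le_of_norm_le_const (C := M)
      (f := fun s => f (Z₂ s)) (a := t) (b := v t) (fun x _ => hM _)
    rwa [Real.norm_eq_abs] at this
  have hCbd : |∫ s in (v c)..t₀, f (Z₂ s)| ≤ M * |t₀ - v c| := by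
    have := intervalIntegral.norm_integral_le_of_norm_le_const (C := M)
      (f := fun s => f (Z₂ s)) (a := v c) (b := t₀) (fun x _ => hM _)
    rwa [Real.norm_eq_abs] at this
  -- decompose the integrals
  have hI₁ : ∫ s in t..t₀, f (Z₁ s)
      = (∫ s in t..c, f (Z₁ s)) + ∫ s in c..t₀, f (Z₁ s) :=
    (intervalIntegral.integral_add_adjacent_intervals
      (hint₁ t c htT₁ hcT₁.le) (hint₁ c t₀ hcT₁.le hT₁.le)).symm
  have hI₂ : ∫ s in t..t₀, f (Z₂ s)
      = (∫ s in t..(v t), f (Z₂ s)) + (∫ s in (v t)..(v c), f (Z₂ s))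
        + ∫ s in (v c)..t₀, f (Z₂ s) := by
    rw [intervalIntegral.integral_add_adjacent_intervals
      (hint₂ t (v t) htT₂ hvtT₂) (hint₂ (v t) (v c) hvtT₂ hvcT₂.le),
      intervalIntegral.integral_add_adjacent_intervals
      (hint₂ t (v c) htT₂ hvcT₂.le) (hint₂ (v c) t₀ hvcT₂.le hT₂.le)]
  -- the numerator bound
  have hN : |(∫ s in t..t₀, f (Z₁ s)) - ∫ s in t..t₀, f (Z₂ s)|
      ≤ C + ε' * (1 + 2 * M) * (t₀ - t) := by
    have hdecomp : (∫ s in t..t₀, f (Z₁ s)) - ∫ s in t..t₀, f (Z₂ s)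
        = ((∫ s in t..c, f (Z₁ s)) - ∫ s in (v t)..(v c), f (Z₂ s))
          - (∫ s in t..(v t), f (Z₂ s)) - (∫ s in (v c)..t₀, f (Z₂ s))
          + ∫ s in c..t₀, f (Z₁ s) := by
      rw [hI₁, hI₂]; ring
    rw [hdecomp]
    have habs : |((∫ s in t..c, f (Z₁ s)) - ∫ s in (v t)..(v c), f (Z₂ s))
          - (∫ s in t..(v t), f (Z₂ s)) - (∫ s in (v c)..t₀, f (Z₂ s))
          + ∫ s in c..t₀, f (Z₁ s)|
        ≤ |(∫ s in t..c, f (Z₁ s)) - ∫ s in (v t)..(v c), f (Z₂ s)|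
          + |∫ s in t..(v t), f (Z₂ s)| + |∫ s in (v c)..t₀, f (Z₂ s)|
          + |∫ s in c..t₀, f (Z₁ s)| := by
      calc _ ≤ |((∫ s in t..c, f (Z₁ s)) - ∫ s in (v t)..(v c), f (Z₂ s))
          - (∫ s in t..(v t), f (Z₂ s)) - (∫ s in (v c)..t₀, f (Z₂ s))|
          + |∫ s in c..t₀, f (Z₁ s)| := abs_add_le _ _
        _ ≤ _ := by
          gcongr
          calc _ ≤ |((∫ s in t..c, f (Z₁ s)) - ∫ s in (v t)..(v c), f (Z₂ s))
              - (∫ s in t..(v t), f (Z₂ s))| + |∫ s in (v c)..t₀, f (Z₂ s)| := abs_sub _ _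
            _ ≤ _ := by gcongr; exact abs_sub _ _
    refine le_trans habs ?_
    have hMB : |∫ s in t..(v t), f (Z₂ s)| ≤ M * |v c - c| + M * ε' * (c - t) := by
      refine le_trans hB ?_
      calc M * |v t - t| ≤ M * (|v c - c| + ε' * (c - t)) := by
            exact mul_le_mul_of_nonneg_left hvt_bound hM0
        _ = M * |v c - c| + M * ε' * (c - t) := by ring
    have hctle : c - t ≤ t₀ - t := by linarith
    have h1 : (ε' + M * ε') * (c - t) ≤ (ε' + M * ε') * (t₀ - t) := by
      apply mul_le_mul_of_nonneg_left hctle; positivity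
    have h2 : M * ε' * (c - t) ≤ M * ε' * (t₀ - t) := by
      apply mul_le_mul_of_nonneg_left hctle; positivity
    have := add_le_add (add_le_add (add_le_add hA hMB) hCbd) (le_refl |∫ s in c..t₀, f (Z₁ s)|)
    refine le_trans this ?_
    rw [hCdef]
    nlinarith [h1, h2]
  -- conclude
  have hε'bound : ε' * (1 + 2 * M) ≤ ε / 2 := by
    rw [hε'def, div_mul_eq_mul_div, div_le_div_iff₀ (by linarith) (by norm_num : (0:ℝ) < 2)]
    nlinarith
  have hCsmall : C / (t₀ - t) ≤ ε / 4 := by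
    rw [div_le_div_iff₀ ht₀t (by norm_num : (0:ℝ) < 4)]
    have h4 : 4 * C / ε ≤ t₀ - t := le_trans (le_max_right _ _) htlen
    rw [div_le_iff₀ hε] at h4
    nlinarith
  rw [Real.dist_eq, sub_zero]
  have heq : (1 / (t₀ - t)) * (∫ s in t..t₀, f (Z₁ s))
      - (1 / (t₀ - t)) * ∫ s in t..t₀, f (Z₂ s)
      = (1 / (t₀ - t)) * ((∫ s in t..t₀, f (Z₁ s)) - ∫ s in t..t₀, f (Z₂ s)) := by ring
  rw [heq, abs_mul, abs_of_pos (by positivity : (0:ℝ) < 1 / (t₀ - t))]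
  have hfinal : (1 / (t₀ - t)) * |(∫ s in t..t₀, f (Z₁ s)) - ∫ s in t..t₀, f (Z₂ s)|
      ≤ (1 / (t₀ - t)) * (C + ε' * (1 + 2 * M) * (t₀ - t)) := by
    apply mul_le_mul_of_nonneg_left hN; positivity
  refine lt_of_le_of_lt hfinal ?_
  have hrw : (1 / (t₀ - t)) * (C + ε' * (1 + 2 * M) * (t₀ - t))
      = C / (t₀ - t) + ε' * (1 + 2 * M) := by
    field_simp
  rw [hrw]
  calc C / (t₀ - t) + ε' * (1 + 2 * M) ≤ ε / 4 + ε / 2 := add_le_add hCsmall hε'bound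
    _ < ε := by linarith
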